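/- Let S = OnePoint ℂ (the Riemann sphere) and let Q be the quotient topological space of S × Fin 2 by the equivalence relation generated by identifying (0,0) with (0,1) (two Riemann spheres glued at one node). Then the map S × Fin 2 → S × Fin 2 given by (z,i) ↦ (z,0) descends to a well-defined continuous map F : Q → Q, and F is not an open map. -/
import Mathlib


open OnePoint

/-- The relation on `(OnePoint ℂ) × Fin 2` identifying `(0,0)` with `(0,1)`;
the quotient `Quot r` (two Riemann spheres glued at one node) is taken with respect to
the equivalence relation generated by `r`. -/
def nodeRel : OnePoint ℂ × Fin 2 → OnePoint ℂ × Fin 2 → Prop :=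
  fun a b => a = (((0 : ℂ) : OnePoint ℂ), 0) ∧ b = (((0 : ℂ) : OnePoint ℂ), 1)

lemma nodeRel_eqvGen {a b : OnePoint ℂ × Fin 2} (h : Relation.EqvGen nodeRel a b) :
    a = b ∨ (a = (((0 : ℂ) : OnePoint ℂ), 0) ∧ b = (((0 : ℂ) : OnePoint ℂ), 1)) ∨
      (a = (((0 : ℂ) : OnePoint ℂ), 1) ∧ b = (((0 : ℂ) : OnePoint ℂ), 0)) := by
  induction h with
  | rel x y hxy => exact Or.inr (Or.inl hxy)
  | refl x => exact Or.inl rfl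
  | symm x y _ ih =>
    rcases ih with h | ⟨h1, h2⟩ | ⟨h1, h2⟩
    · exact Or.inl h.symm
    · exact Or.inr (Or.inr ⟨h2, h1⟩)
    · exact Or.inr (Or.inl ⟨h2, h1⟩)
  | trans x y z _ _ ih1 ih2 =>
    rcases ih1 with h | ⟨h1, h2⟩ | ⟨h1, h2⟩
    · rw [h]; exact ih2
    · rcases ih2 with h | ⟨h3, h4⟩ | ⟨h3, h4⟩
      · exact Or.inr (Or.inl ⟨h1, h ▸ h2⟩)
      · simp [h2] at h3
      · exact Or.inl (h1.trans h4.symm)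
    · rcases ih2 with h | ⟨h3, h4⟩ | ⟨h3, h4⟩
      · exact Or.inr (Or.inr ⟨h1, h ▸ h2⟩)
      · exact Or.inl (h1.trans h4.symm)
      · simp [h2] at h3

/-- the map `(z,i) ↦ (z,0)` descends to a well-defined continuous map
`F : Q → Q` on the quotient `Q` of two Riemann spheres glued at a node, and `F` is
not an open map. -/
theorem double_cover_statement_2 :
    ∃ F : Quot nodeRel → Quot nodeRel, Continuous F ∧
      (∀ a : OnePoint ℂ × Fin 2, F (Quot.mk nodeRel a) = Quot.mk nodeRel (a.1, 0)) ∧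
      ¬ IsOpenMap F := by
  have hresp : ∀ a b, nodeRel a b →
      Quot.mk nodeRel (a.1, (0 : Fin 2)) = Quot.mk nodeRel (b.1, 0) := by
    rintro a b ⟨ha, hb⟩
    rw [ha, hb]
  refine ⟨Quot.lift (fun a => Quot.mk nodeRel (a.1, 0)) hresp, ?_, fun a => rfl, ?_⟩
  · apply continuous_quot_lift
    exact continuous_quot_mk.comp (continuous_fst.prodMk continuous_const)
  · intro hopen
    set F := Quot.lift (fun a : OnePoint ℂ × Fin 2 => Quot.mk nodeRel (a.1, 0)) hresp
    have h1 : IsOpen (F '' Set.univ) := hopen _ isOpen_univ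
    rw [isOpen_coinduced (f := Quot.mk nodeRel)] at h1
    -- the map z ↦ ((z : OnePoint ℂ), 1) is continuous
    have hg : Continuous (fun z : ℂ => (((z : OnePoint ℂ), 1) : OnePoint ℂ × Fin 2)) :=
      (OnePoint.continuous_coe).prodMk continuous_const
    have h2 : IsOpen ((fun z : ℂ => (((z : OnePoint ℂ), 1) : OnePoint ℂ × Fin 2)) ⁻¹'
        (Quot.mk nodeRel ⁻¹' (F '' Set.univ))) := h1.preimage hg
    have h0 : (0 : ℂ) ∈ (fun z : ℂ => (((z : OnePoint ℂ), 1) : OnePoint ℂ × Fin 2)) ⁻¹'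
        (Quot.mk nodeRel ⁻¹' (F '' Set.univ)) := by
      refine ⟨Quot.mk nodeRel (((0 : ℂ) : OnePoint ℂ), 1), trivial, ?_⟩
      show Quot.mk nodeRel (((0 : ℂ) : OnePoint ℂ), 0) = Quot.mk nodeRel (((0 : ℂ) : OnePoint ℂ), 1)
      exact Quot.sound ⟨rfl, rfl⟩
    rw [Metric.isOpen_iff] at h2
    obtain ⟨ε, hε, hball⟩ := h2 0 h0
    have hz : ((ε / 2 : ℝ) : ℂ) ∈ Metric.ball (0 : ℂ) ε := by
      simp
      rw [abs_of_pos hε]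
      linarith
    obtain ⟨q, -, hq⟩ := hball hz
    obtain ⟨a, rfl⟩ := Quot.exists_rep q
    have : Quot.mk nodeRel (a.1, (0 : Fin 2)) =
        Quot.mk nodeRel (((((ε / 2 : ℝ) : ℂ) : OnePoint ℂ), 1) : OnePoint ℂ × Fin 2) := hq
    have hεne : (((ε / 2 : ℝ) : ℂ) : OnePoint ℂ) ≠ ((0 : ℂ) : OnePoint ℂ) := by
      simp only [ne_eq, OnePoint.coe_eq_coe]
      intro h
      have : (ε / 2 : ℝ) = 0 := by exact_mod_cast h
      linarith
    rcases nodeRel_eqvGen (Quot.eqvGen_exact this) with h | ⟨ha, hb⟩ | ⟨ha, hb⟩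
    · have := congrArg Prod.snd h
      simp at this
    · exact hεne (congrArg Prod.fst hb)
    · have := congrArg Prod.snd ha
      simp at this
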